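/- For every extended LTL formula with placeholders φ and all formulas ψ₁, ψ₂: (1) GF φ[ψ₁ W ψ₂] ≡ GF φ[ψ₁ U ψ₂] ∨ (FG ψ₁ ∧ GF φ[tt]); (2) FG φ[ψ₁ U ψ₂] ≡ (GF ψ₂ ∧ FG φ[ψ₁ W ψ₂]) ∨ FG φ[ff]. -/
import Mathlib


namespace ExtLTL

/-- Extended LTL formulas, with the limit operators `GF` and `FG` as atomic
operators. -/
inductive E (Ap : Type) : Type
  | tt    : E Ap
  | ff    : E Ap
  | pos   : Ap → E Ap
  | nlit  : Ap → E Ap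
  | and   : E Ap → E Ap → E Ap
  | or    : E Ap → E Ap → E Ap
  | next  : E Ap → E Ap
  | untl  : E Ap → E Ap → E Ap
  | wuntl : E Ap → E Ap → E Ap
  | gf    : E Ap → E Ap
  | fg    : E Ap → E Ap
  deriving DecidableEq

/-- Infinite words over the alphabet `2^Ap`. -/
abbrev Word (Ap : Type) := ℕ → Set Ap

/-- Suffix of a word starting at position `i`. -/
def suff {Ap : Type} (w : Word Ap) (i : ℕ) : Word Ap := fun n => w (n + i)

/-- Satisfaction relation for extended LTL. -/
def Sat {Ap : Type} : Word Ap → E Ap → Prop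
  | _, E.tt => True
  | _, E.ff => False
  | w, E.pos a => a ∈ w 0
  | w, E.nlit a => a ∉ w 0
  | w, E.and φ ψ => Sat w φ ∧ Sat w ψ
  | w, E.or φ ψ => Sat w φ ∨ Sat w ψ
  | w, E.next φ => Sat (suff w 1) φ
  | w, E.untl φ ψ => ∃ k, Sat (suff w k) ψ ∧ ∀ j < k, Sat (suff w j) φ
  | w, E.wuntl φ ψ => (∀ k, Sat (suff w k) φ) ∨ ∃ k, Sat (suff w k) ψ ∧ ∀ j < k, Sat (suff w j) φ
  | w, E.gf φ => ∀ i : ℕ, ∃ j : ℕ, i ≤ j ∧ Sat (suff w j) φ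
  | w, E.fg φ => ∃ i : ℕ, ∀ j : ℕ, i ≤ j → Sat (suff w j) φ

/-- Equivalence of extended LTL formulas. -/
def Equiv {Ap : Type} (φ ψ : E Ap) : Prop := ∀ w : Word Ap, Sat w φ ↔ Sat w ψ

/-- G φ := φ W ff. -/
def Gf {Ap : Type} (φ : E Ap) : E Ap := E.wuntl φ E.ff

/-- Number of nodes of the syntax tree. -/
def size {Ap : Type} : E Ap → ℕ
  | E.tt => 1
  | E.ff => 1
  | E.pos _ => 1
  | E.nlit _ => 1
  | E.and φ ψ => size φ + size ψ + 1
  | E.or φ ψ => size φ + size ψ + 1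
  | E.next φ => size φ + 1
  | E.untl φ ψ => size φ + size ψ + 1
  | E.wuntl φ ψ => size φ + size ψ + 1
  | E.gf φ => size φ + 1
  | E.fg φ => size φ + 1

/-- Formulas with placeholders: extended LTL formulas over `Option Ap`, where
the extra atomic proposition `pos none` is the placeholder `[·]`. -/
abbrev EP (Ap : Type) := E (Option Ap)

/-- The placeholder occurs only positively (never negated). -/
def posOnly {Ap : Type} : EP Ap → Prop
  | E.nlit none => False
  | E.and φ ψ => posOnly φ ∧ posOnly ψ
  | E.or φ ψ => posOnly φ ∧ posOnly ψ
  | E.next φ => posOnly φ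
  | E.untl φ ψ => posOnly φ ∧ posOnly ψ
  | E.wuntl φ ψ => posOnly φ ∧ posOnly ψ
  | E.gf φ => posOnly φ
  | E.fg φ => posOnly φ
  | _ => True

/-- `subst φ ψ = φ[ψ]`: substitute `ψ` for every occurrence of the placeholder
in `φ`. -/
def subst {Ap : Type} : EP Ap → E Ap → E Ap
  | E.tt, _ => E.tt
  | E.ff, _ => E.ff
  | E.pos none, ψ => ψ
  | E.pos (some a), _ => E.pos a
  | E.nlit none, _ => E.ff    -- never occurs in a formula with positive placeholders
  | E.nlit (some a), _ => E.nlit a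
  | E.and φ₁ φ₂, ψ => E.and (subst φ₁ ψ) (subst φ₂ ψ)
  | E.or φ₁ φ₂, ψ => E.or (subst φ₁ ψ) (subst φ₂ ψ)
  | E.next φ, ψ => E.next (subst φ ψ)
  | E.untl φ₁ φ₂, ψ => E.untl (subst φ₁ ψ) (subst φ₂ ψ)
  | E.wuntl φ₁ φ₂, ψ => E.wuntl (subst φ₁ ψ) (subst φ₂ ψ)
  | E.gf φ, ψ => E.gf (subst φ ψ)
  | E.fg φ, ψ => E.fg (subst φ ψ)

theorem suff_suff {Ap : Type} (w : Word Ap) (i k : ℕ) :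
    suff (suff w i) k = suff w (k + i) := by
  funext n; simp [suff, Nat.add_assoc]

theorem suff_zero {Ap : Type} (w : Word Ap) : suff w 0 = w := by
  funext n; simp [suff]

/-- Monotonicity of substitution in positive-placeholder formulas, relative to a
fixed word: if `ψ → ψ'` at every suffix of `w`, then `φ[ψ] → φ[ψ']` at `w`. -/
theorem monoAt {Ap : Type} (ψ ψ' : E Ap) :
    ∀ (φ : EP Ap), posOnly φ → ∀ (w : Word Ap),
    (∀ k, Sat (suff w k) ψ → Sat (suff w k) ψ') →
    Sat w (subst φ ψ) → Sat w (subst φ ψ') := by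
  intro φ
  induction φ with
  | tt => intro _ w _ hs; exact hs
  | ff => intro _ w _ hs; exact hs
  | pos a =>
    cases a with
    | none =>
      intro _ w h hs
      have := h 0
      rw [suff_zero] at this
      exact this hs
    | some a => intro _ w _ hs; exact hs
  | nlit a =>
    cases a with
    | none => intro hp; exact absurd hp (by simp [posOnly])
    | some a => intro _ w _ hs; exact hs
  | and φ₁ φ₂ ih₁ ih₂ =>
    intro hp w h hs
    exact ⟨ih₁ hp.1 w h hs.1, ih₂ hp.2 w h hs.2⟩
  | or φ₁ φ₂ ih₁ ih₂ =>
    intro hp w h hs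
    exact hs.imp (ih₁ hp.1 w h) (ih₂ hp.2 w h)
  | next φ ih =>
    intro hp w h hs
    exact ih hp (suff w 1) (fun k => by rw [suff_suff]; exact h (k + 1)) hs
  | untl φ₁ φ₂ ih₁ ih₂ =>
    intro hp w h hs
    obtain ⟨k, hk, hj⟩ := hs
    exact ⟨k, ih₂ hp.2 _ (fun m => by rw [suff_suff]; exact h _) hk,
      fun j hjk => ih₁ hp.1 _ (fun m => by rw [suff_suff]; exact h _) (hj j hjk)⟩
  | wuntl φ₁ φ₂ ih₁ ih₂ =>
    intro hp w h hs
    cases hs with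
    | inl hs =>
      exact Or.inl fun k => ih₁ hp.1 _ (fun m => by rw [suff_suff]; exact h _) (hs k)
    | inr hs =>
      obtain ⟨k, hk, hj⟩ := hs
      exact Or.inr ⟨k, ih₂ hp.2 _ (fun m => by rw [suff_suff]; exact h _) hk,
        fun j hjk => ih₁ hp.1 _ (fun m => by rw [suff_suff]; exact h _) (hj j hjk)⟩
  | gf φ ih =>
    intro hp w h hs i
    obtain ⟨j, hij, hj⟩ := hs i
    exact ⟨j, hij, ih hp _ (fun m => by rw [suff_suff]; exact h _) hj⟩
  | fg φ ih =>
    intro hp w h hs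
    obtain ⟨i, hi⟩ := hs
    exact ⟨i, fun j hij => ih hp _ (fun m => by rw [suff_suff]; exact h _) (hi j hij)⟩

/-- removing `W` under `GF` and `U` under `FG`. -/
theorem fix_limit_subformulas {Ap : Type} [Fintype Ap] :
    ∀ φ : EP Ap, posOnly φ → ∀ ψ₁ ψ₂ : E Ap,
      -- (1)  GF φ[ψ₁ W ψ₂] ≡ GF φ[ψ₁ U ψ₂] ∨ (FG ψ₁ ∧ GF φ[tt])
      Equiv (E.gf (subst φ (E.wuntl ψ₁ ψ₂)))
            (E.or (E.gf (subst φ (E.untl ψ₁ ψ₂)))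
                  (E.and (E.fg ψ₁) (E.gf (subst φ E.tt)))) ∧
      -- (2)  FG φ[ψ₁ U ψ₂] ≡ (GF ψ₂ ∧ FG φ[ψ₁ W ψ₂]) ∨ FG φ[ff]
      Equiv (E.fg (subst φ (E.untl ψ₁ ψ₂)))
            (E.or (E.and (E.gf ψ₂) (E.fg (subst φ (E.wuntl ψ₁ ψ₂))))
                  (E.fg (subst φ E.ff))) := by
  intro φ hpos ψ₁ ψ₂
  constructor
  · -- (1)
    intro w
    constructor
    · intro hgf
      by_cases hfg : Sat w (E.fg ψ₁)
      · exact Or.inr ⟨hfg, fun i => by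
          obtain ⟨j, hij, hj⟩ := hgf i
          exact ⟨j, hij, monoAt _ _ φ hpos _ (fun k _ => trivial) hj⟩⟩
      · left
        have hfg' : ¬ ∃ i, ∀ j, i ≤ j → Sat (suff w j) ψ₁ := hfg
        push_neg at hfg'
        have key : ∀ p, Sat (suff w p) (E.wuntl ψ₁ ψ₂) →
            Sat (suff w p) (E.untl ψ₁ ψ₂) := by
          intro p hw
          cases hw with
          | inr h => exact h
          | inl h =>
            exfalso
            obtain ⟨j, hpj, hnj⟩ := hfg' p
            apply hnj
            have := h (j - p)
            rw [suff_suff, Nat.sub_add_cancel hpj] at this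
            exact this
        intro i
        obtain ⟨j, hij, hj⟩ := hgf i
        exact ⟨j, hij, monoAt _ _ φ hpos (suff w j)
          (fun k => by rw [suff_suff]; exact key (k + j)) hj⟩
    · intro h
      cases h with
      | inl h =>
        intro i
        obtain ⟨j, hij, hj⟩ := h i
        exact ⟨j, hij, monoAt (E.untl ψ₁ ψ₂) (E.wuntl ψ₁ ψ₂) φ hpos _
          (fun k hk => Or.inr hk) hj⟩
      | inr h =>
        obtain ⟨⟨i0, hi0⟩, hgt⟩ := h
        intro i
        obtain ⟨j, hij, hj⟩ := hgt (max i i0)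
        have hj0 : i0 ≤ j := le_trans (le_max_right _ _) hij
        refine ⟨j, le_trans (le_max_left _ _) hij, ?_⟩
        refine monoAt _ _ φ hpos (suff w j) (fun k _ => ?_) hj
        left
        intro m
        rw [suff_suff, suff_suff]
        exact hi0 _ (by omega)
  · -- (2)
    intro w
    constructor
    · intro hfgu
      by_cases hg2 : Sat w (E.gf ψ₂)
      · refine Or.inl ⟨hg2, ?_⟩
        obtain ⟨i, hi⟩ := hfgu
        exact ⟨i, fun j hij =>
          monoAt (E.untl ψ₁ ψ₂) (E.wuntl ψ₁ ψ₂) φ hpos _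
            (fun k hk => Or.inr hk) (hi j hij)⟩
      · right
        have hg2' : ¬ ∀ i, ∃ j, i ≤ j ∧ Sat (suff w j) ψ₂ := hg2
        push_neg at hg2'
        obtain ⟨i1, h1⟩ := hg2'
        obtain ⟨i0, h0⟩ := hfgu
        refine ⟨max i0 i1, fun j hij => ?_⟩
        have hj0 : i0 ≤ j := le_trans (le_max_left _ _) hij
        have hj1 : i1 ≤ j := le_trans (le_max_right _ _) hij
        refine monoAt _ _ φ hpos (suff w j) (fun k hk => ?_) (h0 j hj0)
        exfalso
        rw [suff_suff] at hk
        obtain ⟨m, hm, _⟩ := hk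
        rw [suff_suff] at hm
        exact h1 (m + (k + j)) (by omega) hm
    · intro h
      cases h with
      | inl h =>
        obtain ⟨hg2, ⟨i, hi⟩⟩ := h
        refine ⟨i, fun j hij => ?_⟩
        refine monoAt _ _ φ hpos (suff w j) (fun k hk => ?_) (hi j hij)
        cases hk with
        | inr hk => exact hk
        | inl hall =>
          obtain ⟨m, hpm, hm⟩ := hg2 (k + j)
          refine ⟨m - (k + j), ?_, fun j' _ => hall j'⟩
          have he : suff (suff (suff w j) k) (m - (k + j)) = suff w m := by
            funext n; simp only [suff]
            have harith : n + (m - (k + j)) + k + j = n + m := by omega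
            rw [harith]
          rw [he]; exact hm
      | inr h =>
        obtain ⟨i, hi⟩ := h
        exact ⟨i, fun j hij =>
          monoAt E.ff (E.untl ψ₁ ψ₂) φ hpos _
            (fun k hk => (hk : False).elim) (hi j hij)⟩

end ExtLTL
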